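/- Let F be a field of characteristic different from 2 and γ ∈ F with γ ≠ 0. The 4-dimensional non-unital associative F-algebra with basis a, b, c, d and nonzero products a² = b, ab = ba = d, c² = γd is isomorphic to the algebra with the same basis and nonzero products a² = b, ab = ba = d, c² = d. -/

import Mathlib

/-- The multiplication table `a² = b`, `ab = ba = d`, `c² = γd` on a basis
`a = v 0`, `b = v 1`, `c = v 2`, `d = v 3`; all other products of basis elements
zero. -/
def IsAGammaBasis {F A : Type*} [Field F] [NonUnitalRing A] [Module F A]
    (γ : F) (v : Module.Basis (Fin 4) F A) : Prop :=
  v 0 * v 0 = v 1 ∧ v 0 * v 1 = v 3 ∧ v 1 * v 0 = v 3 ∧ v 2 * v 2 = γ • v 3 ∧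
  v 0 * v 2 = 0 ∧ v 0 * v 3 = 0 ∧ v 1 * v 1 = 0 ∧ v 1 * v 2 = 0 ∧ v 1 * v 3 = 0 ∧
  v 2 * v 0 = 0 ∧ v 2 * v 1 = 0 ∧ v 2 * v 3 = 0 ∧
  v 3 * v 0 = 0 ∧ v 3 * v 1 = 0 ∧ v 3 * v 2 = 0 ∧ v 3 * v 3 = 0

/-- Over a field of characteristic `≠ 2`, for any `γ ≠ 0` the algebra with table
`a² = b`, `ab = ba = d`, `c² = γd` is isomorphic to the one with table
`a² = b`, `ab = ba = d`, `c² = d`. -/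
theorem stmt15 {F A B : Type*} [Field F] (hchar : (2 : F) ≠ 0)
    [NonUnitalRing A] [Module F A] [SMulCommClass F A A] [IsScalarTower F A A]
    [NonUnitalRing B] [Module F B] [SMulCommClass F B B] [IsScalarTower F B B]
    (γ : F) (hγ : γ ≠ 0)
    (v : Module.Basis (Fin 4) F A) (w : Module.Basis (Fin 4) F B)
    (hv : IsAGammaBasis γ v) (hw : IsAGammaBasis 1 w) :
    ∃ e : A ≃ₗ[F] B, ∀ x y : A, e (x * y) = e x * e y := by
  obtain ⟨h1,h2,h3,h4,h5,h6,h7,h8,h9,h10,h11,h12,h13,h14,h15,h16⟩ := hv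
  obtain ⟨g1,g2,g3,g4,g5,g6,g7,g8,g9,g10,g11,g12,g13,g14,g15,g16⟩ := hw
  rw [one_smul] at g4
  set c : Fin 4 → F := ![γ, γ^2, γ^2, γ^3] with hc
  have hcne : ∀ i, c i ≠ 0 := by
    intro i; fin_cases i <;> simp [hc, hγ]
  let f : A →ₗ[F] B := v.constr F (fun i => c i • w i)
  let g : B →ₗ[F] A := w.constr F (fun i => (c i)⁻¹ • v i)
  have hf : ∀ i, f (v i) = c i • w i := fun i => v.constr_basis F _ i
  have hg : ∀ i, g (w i) = (c i)⁻¹ • v i := fun i => w.constr_basis F _ i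
  have hgf : g.comp f = LinearMap.id := by
    apply v.ext; intro i
    simp only [LinearMap.comp_apply, LinearMap.id_apply, hf, hg, map_smul, smul_smul, mul_inv_cancel₀ (hcne i), one_smul]
  have hfg : f.comp g = LinearMap.id := by
    apply w.ext; intro i
    simp only [LinearMap.comp_apply, LinearMap.id_apply, hf, hg, map_smul, smul_smul, inv_mul_cancel₀ (hcne i), one_smul]
  refine ⟨LinearEquiv.ofLinear f g hfg hgf, ?_⟩
  have key : ((LinearMap.mul F A).compr₂ f) =
      ((LinearMap.mul F B).comp f).compl₂ f := by
    apply v.ext; intro i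
    apply v.ext; intro j
    fin_cases i <;> fin_cases j <;>
      simp [hf, h1,h2,h3,h4,h5,h6,h7,h8,h9,h10,h11,h12,h13,h14,h15,h16,
        g1,g2,g3,g4,g5,g6,g7,g8,g9,g10,g11,g12,g13,g14,g15,g16,
        smul_mul_assoc, mul_smul_comm, smul_smul, hc] <;> ring_nf
  intro x y
  have := LinearMap.congr_fun (LinearMap.congr_fun key x) y
  simpa using this
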